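/- If X is a T-reflection group that separates reflections, then the center of X equals the kernel of the unique reflection morphism X → 𝒯 to the terminal T-reflection group. -/
import Mathlib


/-- A symmetric system: a set with a multiplication satisfying (S1) and (S2). -/
structure SymmetricSystem (T : Type*) where
  mul : T → T → T
  s1 : ∀ s t : T, mul s (mul s t) = t
  s2 : ∀ r s t : T, mul r (mul s t) = mul (mul r s) (mul r t)

/-- A `T`-reflection group: a group `X` acting on `T` together with a map `t ↦ t^X`
satisfying axioms (G1)-(G4). -/
structure ReflectionGroup {T : Type*} (S : SymmetricSystem T) (X : Type*) [Group X] where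
  act : X → T → T
  act_one : ∀ t : T, act 1 t = t
  act_mul : ∀ x y : X, ∀ t : T, act (x * y) t = act x (act y t)
  refl : T → X
  g1 : Subgroup.closure (Set.range refl) = ⊤
  g2 : ∀ s t : T, act (refl t) s = S.mul t s
  g3 : ∀ s t : T, refl t * refl s * (refl t)⁻¹ = refl (S.mul t s)
  g4 : ∀ t : T, refl t * refl t = 1

/-- For `s ∈ T`, the map `t ↦ s.t` is a bijection of `T` (by (S1)). -/
def SymmetricSystem.perm {T : Type*} (S : SymmetricSystem T) (s : T) : Equiv.Perm T :=
  Function.Involutive.toPerm (S.mul s) (fun t => S.s1 s t)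

/-- The terminal reflection group: the subgroup of the symmetric group of `T` generated by
the maps `t ↦ s.t`. -/
def SymmetricSystem.terminal {T : Type*} (S : SymmetricSystem T) : Subgroup (Equiv.Perm T) :=
  Subgroup.closure (Set.range S.perm)



/-- If `X` is a `T`-reflection group that separates reflections, then its center is the
kernel of the reflection morphism to the terminal reflection group. -/
theorem center_eq_ker_toTerminal
    {T : Type*} (S : SymmetricSystem T) {X : Type*} [Group X]
    (RX : ReflectionGroup S X) (hsep : Function.Injective RX.refl)
    (φ : X →* S.terminal)
    (hφ : ∀ t : T, (φ (RX.refl t) : Equiv.Perm T) = S.perm t) :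
    φ.ker = Subgroup.center X := by
  -- conjugation formula: x * refl s * x⁻¹ = refl (act x s)
  have hconj : ∀ x : X, ∀ s : T, x * RX.refl s * x⁻¹ = RX.refl (RX.act x s) := by
    intro x
    have hx : x ∈ Subgroup.closure (Set.range RX.refl) := by rw [RX.g1]; trivial
    induction hx using Subgroup.closure_induction with
    | mem y hy =>
      obtain ⟨t, rfl⟩ := hy
      intro s
      rw [RX.g3, ← RX.g2]
    | one => intro s; simp [RX.act_one]
    | mul a b _ _ ha hb =>
      intro s
      have : a * b * RX.refl s * (a * b)⁻¹ = a * (b * RX.refl s * b⁻¹) * a⁻¹ := by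
        group
      rw [this, hb, ha, RX.act_mul]
    | inv a _ ha =>
      intro s
      have h1 := ha (RX.act a⁻¹ s)
      have h2 : RX.act a (RX.act a⁻¹ s) = s := by
        rw [← RX.act_mul, mul_inv_cancel, RX.act_one]
      rw [h2] at h1
      rw [← h1]; group
  -- φ computes the action
  have hact : ∀ x : X, ∀ s : T, (φ x : Equiv.Perm T) s = RX.act x s := by
    intro x
    have hx : x ∈ Subgroup.closure (Set.range RX.refl) := by rw [RX.g1]; trivial
    induction hx using Subgroup.closure_induction with
    | mem y hy =>
      obtain ⟨t, rfl⟩ := hy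
      intro s
      rw [hφ, RX.g2]
      rfl
    | one => intro s; simp [RX.act_one]
    | mul a b _ _ ha hb =>
      intro s
      rw [map_mul]
      have : ((φ a * φ b : S.terminal) : Equiv.Perm T) s
          = (φ a : Equiv.Perm T) ((φ b : Equiv.Perm T) s) := rfl
      rw [this, hb, ha, RX.act_mul]
    | inv a _ ha =>
      intro s
      have h2 : RX.act a (RX.act a⁻¹ s) = s := by
        rw [← RX.act_mul, mul_inv_cancel, RX.act_one]
      have h1 := ha (RX.act a⁻¹ s)
      rw [h2] at h1
      rw [map_inv]
      have : ((φ a)⁻¹ : S.terminal) = (φ a)⁻¹ := rfl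
      calc ((φ a)⁻¹ : Equiv.Perm T) s
          = ((φ a)⁻¹ : Equiv.Perm T) ((φ a : Equiv.Perm T) (RX.act a⁻¹ s)) := by rw [h1]
        _ = RX.act a⁻¹ s := by
            have : ((φ a)⁻¹ : Equiv.Perm T) = ((φ a : Equiv.Perm T))⁻¹ := rfl
            rw [this]; exact Equiv.Perm.inv_eq_iff_eq.mpr rfl
  ext x
  constructor
  · intro hx
    have hfix : ∀ t : T, RX.act x t = t := by
      intro t
      rw [← hact x t, MonoidHom.mem_ker.mp hx]
      rfl
    rw [Subgroup.mem_center_iff]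
    intro g
    have hg : g ∈ Subgroup.closure (Set.range RX.refl) := by rw [RX.g1]; trivial
    have key : ∀ t : T, RX.refl t * x = x * RX.refl t := by
      intro t
      have := hconj x t
      rw [hfix t] at this
      have : x * RX.refl t = RX.refl t * x := by
        calc x * RX.refl t = x * RX.refl t * x⁻¹ * x := by group
          _ = RX.refl t * x := by rw [this]
      exact this.symm
    induction hg using Subgroup.closure_induction with
    | mem y hy => obtain ⟨t, rfl⟩ := hy; exact key t
    | one => simp
    | mul a b _ _ ha hb => rw [mul_assoc, hb, ← mul_assoc, ha, mul_assoc]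
    | inv a _ ha =>
      calc a⁻¹ * x = a⁻¹ * x * a * a⁻¹ := by group
        _ = a⁻¹ * (a * x) * a⁻¹ := by rw [mul_assoc a⁻¹ x a, ← ha]
        _ = x * a⁻¹ := by group
  · intro hx
    have hfix : ∀ t : T, RX.act x t = t := by
      intro t
      apply hsep
      rw [← hconj x t]
      have := (Subgroup.mem_center_iff.mp hx (RX.refl t)).symm
      calc x * RX.refl t * x⁻¹ = RX.refl t * x * x⁻¹ := by rw [this]
        _ = RX.refl t := by group
    rw [MonoidHom.mem_ker]
    ext t
    have : ((φ x : S.terminal) : Equiv.Perm T) t = t := by rw [hact x t, hfix t]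
    simpa using this
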